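/- arXiv:1203.0216 — 2 statements merged into one kernel-verified Lean document; each statement's English description precedes it below -/
import Mathlib

section
/- Let E be a nonzero hermitian vector bundle over an arithmetic curve Spec O_K (or over ℚ̄). Then the set {μ̂(F̄) : F a nonzero submodule (subspace) of E} attains its maximum, and there exists a nonzero subbundle Ē_des of Ē of maximal slope containing every subbundle of Ē whose slope is maximal. -/
open Module

section Aux

variable {K E : Type*} [Field K] [AddCommGroup E] [Module K E] [FiniteDimensional K E]

/-- If `x ∉ W` then the line spanned by `x` meets `W` trivially. -/
lemma aux_inf_span_eq_bot (W : Submodule K E) (x : E) (hx : x ∉ W) :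
    W ⊓ Submodule.span K {x} = ⊥ := by
  rw [eq_bot_iff]
  rintro y ⟨hyW, hy⟩
  rcases Submodule.mem_span_singleton.mp hy with ⟨a, rfl⟩
  rcases eq_or_ne a 0 with rfl | ha
  · simp
  · exact absurd (by simpa [ha] using W.smul_mem a⁻¹ hyW) hx

/-- A submodular degree function with `deg ⊥ = 0` is bounded above. -/
lemma aux_deg_bdd (deg : Submodule K E → ℝ) (hzero : deg ⊥ = 0)
    (hsub : ∀ A B : Submodule K E, deg A + deg B ≤ deg (A ⊓ B) + deg (A ⊔ B)) :
    ∃ B : ℝ, ∀ W : Submodule K E, deg W ≤ B := by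
  classical
  set n := finrank K E with hn
  let b : Basis (Fin n) K E := Module.finBasis K E
  set C : ℝ := ∑ i : Fin n, |deg (Submodule.span K {b i})| with hC
  have hC0 : 0 ≤ C := Finset.sum_nonneg fun i _ => abs_nonneg _
  have hCi : ∀ i : Fin n, -deg (Submodule.span K {b i}) ≤ C := by
    intro i
    calc -deg (Submodule.span K {b i}) ≤ |deg (Submodule.span K {b i})| := neg_le_abs _
    _ ≤ C := Finset.single_le_sum (f := fun j => |deg (Submodule.span K {b j})|)
        (fun j _ => abs_nonneg _) (Finset.mem_univ i)
  have key : ∀ k : ℕ, ∀ W : Submodule K E, n ≤ finrank K ↥W + k →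
      deg W ≤ deg ⊤ + k * C := by
    intro k
    induction k with
    | zero =>
      intro W hW
      have h1 : finrank K ↥W = n := le_antisymm (W.finrank_le) (by simpa using hW)
      have : W = ⊤ := Submodule.eq_top_of_finrank_eq h1
      simp [this]
    | succ k ih =>
      intro W hW
      by_cases hcase : n ≤ finrank K ↥W + k
      · have h := ih W hcase
        push_cast
        nlinarith [hC0]
      · -- W is proper: some basis vector is not in W
        have hWtop : W ≠ ⊤ := by
          intro h
          rw [h] at hcase
          have : finrank K ↥(⊤ : Submodule K E) = n := finrank_top K E
          omega
        have hex : ∃ i : Fin n, b i ∉ W := by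
          by_contra h
          push_neg at h
          apply hWtop
          have h2 : Submodule.span K (Set.range b) ≤ W :=
            Submodule.span_le.mpr (Set.range_subset_iff.mpr h)
          rw [b.span_eq] at h2
          exact le_antisymm le_top h2
        obtain ⟨i, hi⟩ := hex
        set L : Submodule K E := Submodule.span K {b i} with hL
        have hbi0 : b i ≠ 0 := b.ne_zero i
        have hinf : W ⊓ L = ⊥ := aux_inf_span_eq_bot W (b i) hi
        have hLr : finrank K ↥L = 1 := finrank_span_singleton hbi0
        have hrk : finrank K ↥(W ⊔ L) = finrank K ↥W + 1 := by
          have h := Submodule.finrank_sup_add_finrank_inf_eq W L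
          rw [hinf, hLr] at h
          simp at h
          omega
        have h1 : deg W + deg L ≤ deg (W ⊔ L) := by
          have := hsub W L
          rw [hinf, hzero] at this
          linarith
        have h2 : deg (W ⊔ L) ≤ deg ⊤ + k * C := by
          apply ih
          omega
        have h3 : -deg L ≤ C := hCi i
        push_cast
        nlinarith
  refine ⟨deg ⊤ + n * C + 1, fun W => ?_⟩
  have := key n W (by omega)
  nlinarith [hC0]

end Aux

set_option maxHeartbeats 1000000 in
/-- Abstract form of the existence of the destabilizing subbundle: on a
nonzero finite-dimensional vector space, any degree function on the lattice of
subspaces with `deg ⊥ = 0` satisfying the submodularity inequality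
`deg F₁ + deg F₂ ≤ deg (F₁ ⊓ F₂) + deg (F₁ ⊔ F₂)` admits a nonzero subspace of
maximal slope (`slope F = deg F / rank F`) containing every subspace of
maximal slope; in particular the set of slopes attains its maximum. -/
theorem stmt14 {K E : Type*} [Field K] [AddCommGroup E] [Module K E]
    [FiniteDimensional K E] [Nontrivial E]
    (deg : Submodule K E → ℝ) (hzero : deg ⊥ = 0)
    (hsub : ∀ A B : Submodule K E, deg A + deg B ≤ deg (A ⊓ B) + deg (A ⊔ B)) :
    ∃ D : Submodule K E, D ≠ ⊥ ∧
      IsGreatest {x : ℝ | ∃ W : Submodule K E, W ≠ ⊥ ∧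
          x = deg W / (Module.finrank K W : ℝ)}
        (deg D / (Module.finrank K D : ℝ)) ∧
      ∀ W : Submodule K E, W ≠ ⊥ →
        deg W / (Module.finrank K W : ℝ) = deg D / (Module.finrank K D : ℝ) → W ≤ D := by
  classical
  set n := finrank K E with hn
  have hn1 : 1 ≤ n := by
    have : 0 < n := finrank_pos
    omega
  have htopne : (⊤ : Submodule K E) ≠ ⊥ := by
    intro h
    obtain ⟨x, hx⟩ := exists_ne (0 : E)
    have : x ∈ (⊥ : Submodule K E) := h ▸ Submodule.mem_top
    exact hx (by simpa using this)
  have hrk_pos : ∀ W : Submodule K E, W ≠ ⊥ → 0 < (finrank K ↥W : ℝ) := by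
    intro W hW
    have : finrank K ↥W ≠ 0 := fun h => hW (Submodule.finrank_eq_zero.mp h)
    positivity
  set S : Set ℝ := {x : ℝ | ∃ W : Submodule K E, W ≠ ⊥ ∧
      x = deg W / (Module.finrank K W : ℝ)} with hS
  have hSne : S.Nonempty := ⟨_, ⊤, htopne, rfl⟩
  have hSbdd : BddAbove S := by
    obtain ⟨B, hB⟩ := aux_deg_bdd deg hzero hsub
    refine ⟨max B 0, ?_⟩
    rintro x ⟨W, hW, rfl⟩
    have hr := hrk_pos W hW
    rcases le_or_gt (deg W) 0 with h | h
    · exact le_trans (div_nonpos_of_nonpos_of_nonneg h hr.le) (le_max_right _ _)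
    · have h1 : (1 : ℝ) ≤ (finrank K ↥W : ℝ) := by
        have : finrank K ↥W ≠ 0 := fun h0 => hW (Submodule.finrank_eq_zero.mp h0)
        exact_mod_cast Nat.one_le_iff_ne_zero.mpr this
      calc deg W / (finrank K ↥W : ℝ) ≤ deg W := div_le_self h.le h1
      _ ≤ max B 0 := le_trans (hB W) (le_max_left _ _)
  set c : ℝ := sSup S with hc
  have hub : ∀ W : Submodule K E, W ≠ ⊥ → deg W / (finrank K ↥W : ℝ) ≤ c :=
    fun W hW => le_csSup hSbdd ⟨W, hW, rfl⟩
  have hdegle : ∀ W : Submodule K E, deg W ≤ c * (finrank K ↥W : ℝ) := by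
    intro W
    rcases eq_or_ne W ⊥ with rfl | hW
    · simp [hzero]
    · have h := hub W hW
      have hr := hrk_pos W hW
      rw [div_le_iff₀ hr] at h
      linarith
  have hkey : ∀ A B : Submodule K E, deg A + deg B - deg (A ⊓ B) ≤ deg (A ⊔ B) := by
    intro A B
    have := hsub A B
    linarith
  -- Step: the supremum of slopes is attained.
  have hatt : ∃ W : Submodule K E, W ≠ ⊥ ∧ deg W / (finrank K ↥W : ℝ) = c := by
    by_contra hno
    push_neg at hno
    have hlt : ∀ W : Submodule K E, W ≠ ⊥ → deg W / (finrank K ↥W : ℝ) < c :=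
      fun W hW => lt_of_le_of_ne (hub W hW) (hno W hW)
    -- ranks at which the sup of slopes is c
    set P : ℕ → Prop := fun r => ∀ ε : ℝ, 0 < ε → ∃ W : Submodule K E, W ≠ ⊥ ∧
        finrank K ↥W = r ∧ c - ε < deg W / (finrank K ↥W : ℝ) with hP
    have hPex : ∃ r ≤ n, P r := by
      by_contra h
      push_neg at h
      have hchoice : ∀ r : ℕ, r ≤ n → ∃ ε : ℝ, 0 < ε ∧ ∀ W : Submodule K E, W ≠ ⊥ →
          finrank K ↥W = r → deg W / (finrank K ↥W : ℝ) ≤ c - ε := by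
        intro r hr
        have h2 := h r hr
        simp only [hP] at h2
        push_neg at h2
        obtain ⟨ε, hε, hεall⟩ := h2
        exact ⟨ε, hε, fun W hW hrW => hεall W hW hrW⟩
      choose εf hεf using fun r (hr : r ≤ n) => hchoice r hr
      set εmin : ℝ := (Finset.range (n + 1)).inf' (show (Finset.range (n + 1)).Nonempty from ⟨0, by simp⟩)
        (fun r => if hr : r ≤ n then εf r hr else 1) with hεmin
      have hεminpos : 0 < εmin := by
        rw [hεmin, Finset.lt_inf'_iff]
        intro r hr
        by_cases hr' : r ≤ n
        · simpa [hr'] using (hεf r hr').1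
        · simp [hr']
      obtain ⟨x, hx, hlt'⟩ := exists_lt_of_lt_csSup hSne (show c - εmin < c by linarith)
      obtain ⟨W, hW, rfl⟩ := hx
      have hrWn : finrank K ↥W ≤ n := W.finrank_le
      have h4 := (hεf (finrank K ↥W) hrWn).2 W hW rfl
      have h5 : εmin ≤ εf (finrank K ↥W) hrWn := by
        rw [hεmin]
        have hmem : finrank K ↥W ∈ Finset.range (n + 1) := Finset.mem_range.mpr (by omega)
        have := Finset.inf'_le (fun r => if hr : r ≤ n then εf r hr else 1) hmem
        rw [dif_pos hrWn] at this
        exact this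
      linarith
    set r₀ : ℕ := Nat.findGreatest P n with hr₀
    obtain ⟨r, hrn, hr⟩ := hPex
    have hPr₀ : P r₀ := Nat.findGreatest_spec hrn hr
    have hgr : ∀ m, r₀ < m → m ≤ n → ¬ P m := fun m h1 h2 =>
      Nat.findGreatest_is_greatest h1 h2
    have hr₀n : r₀ ≤ n := Nat.findGreatest_le n
    have hr₀pos : 1 ≤ r₀ := by
      rcases Nat.eq_zero_or_pos r₀ with h0 | h
      · obtain ⟨W, hW, hrW, _⟩ := hPr₀ 1 one_pos
        rw [h0] at hrW
        exact absurd (Submodule.finrank_eq_zero.mp hrW) hW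
      · omega
    have hr₀lt : r₀ < n := by
      rcases lt_or_eq_of_le hr₀n with h | h
      · exact h
      · exfalso
        have hslopetop : c ≤ deg ⊤ / (finrank K ↥(⊤ : Submodule K E) : ℝ) := by
          by_contra hcon
          push_neg at hcon
          obtain ⟨W, hW, hrW, hsl⟩ := hPr₀ (c - deg ⊤ / (finrank K ↥(⊤ : Submodule K E) : ℝ))
            (by linarith)
          have : W = ⊤ := Submodule.eq_top_of_finrank_eq (by rw [hrW, h])
          rw [this] at hsl
          linarith
        exact absurd (hlt ⊤ htopne) (not_lt.mpr hslopetop)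
    -- uniform gap for ranks above r₀
    have hchoice2 : ∀ m : ℕ, r₀ < m → m ≤ n → ∃ ε : ℝ, 0 < ε ∧
        ∀ W : Submodule K E, W ≠ ⊥ → finrank K ↥W = m →
          deg W / (finrank K ↥W : ℝ) ≤ c - ε := by
      intro m h1 h2
      have h3 := hgr m h1 h2
      simp only [hP] at h3
      push_neg at h3
      obtain ⟨ε, hε, hεall⟩ := h3
      exact ⟨ε, hε, fun W hW hrW => hεall W hW hrW⟩
    choose εg hεg using fun m (h1 : r₀ < m) (h2 : m ≤ n) => hchoice2 m h1 h2
    set ε : ℝ := (Finset.Ioc r₀ n).inf' (show (Finset.Ioc r₀ n).Nonempty from ⟨n, Finset.mem_Ioc.mpr ⟨hr₀lt, le_refl n⟩⟩)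
      (fun m => if h : r₀ < m ∧ m ≤ n then εg m h.1 h.2 else 1) with hε
    have hεpos : 0 < ε := by
      rw [hε, Finset.lt_inf'_iff]
      intro m hm
      rw [Finset.mem_Ioc] at hm
      simpa [hm.1, hm.2] using (hεg m hm.1 hm.2).1
    have hεle : ∀ m (h1 : r₀ < m) (h2 : m ≤ n), ε ≤ εg m h1 h2 := by
      intro m h1 h2
      rw [hε]
      have hmem : m ∈ Finset.Ioc r₀ n := Finset.mem_Ioc.mpr ⟨h1, h2⟩
      have := Finset.inf'_le (fun m => if h : r₀ < m ∧ m ≤ n then εg m h.1 h.2 else 1) hmem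
      rw [dif_pos ⟨h1, h2⟩] at this
      exact this
    set δ : ℝ := ε / (2 * n + 1) with hδ
    have hδpos : 0 < δ := by
      rw [hδ]
      positivity
    -- pick two distinct rank-r₀ subspaces of slope > c - δ
    obtain ⟨W₁, hW₁, hrW₁, hsl₁⟩ := hPr₀ δ hδpos
    have hsl₁lt : deg W₁ / (finrank K ↥W₁ : ℝ) < c := hlt W₁ hW₁
    obtain ⟨W₂, hW₂, hrW₂, hsl₂⟩ := hPr₀ (min δ (c - deg W₁ / (finrank K ↥W₁ : ℝ)))
      (lt_min hδpos (by linarith))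
    have hsl₂δ : c - δ < deg W₂ / (finrank K ↥W₂ : ℝ) :=
      lt_of_le_of_lt (by have := min_le_left δ (c - deg W₁ / (finrank K ↥W₁ : ℝ)); linarith)
        hsl₂
    have hsl₂₁ : deg W₁ / (finrank K ↥W₁ : ℝ) < deg W₂ / (finrank K ↥W₂ : ℝ) := by
      have := min_le_right δ (c - deg W₁ / (finrank K ↥W₁ : ℝ))
      linarith
    have hne12 : W₁ ≠ W₂ := by
      intro h
      rw [h] at hsl₂₁
      exact lt_irrefl _ hsl₂₁
    -- the join
    set V : Submodule K E := W₁ ⊔ W₂ with hV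
    have hVne : V ≠ ⊥ := by
      intro h
      exact hW₁ (le_bot_iff.mp (h ▸ (le_sup_left : W₁ ≤ V)))
    have hinf_lt : finrank K ↥(W₁ ⊓ W₂) < r₀ := by
      have hle1 : finrank K ↥(W₁ ⊓ W₂) ≤ finrank K ↥W₁ :=
        Submodule.finrank_mono inf_le_left
      rcases lt_or_eq_of_le hle1 with h | h
      · omega
      · exfalso
        have h1 : W₁ ⊓ W₂ = W₁ :=
          Submodule.eq_of_le_of_finrank_le inf_le_left (le_of_eq h.symm)
        have h2 : W₁ ≤ W₂ := h1 ▸ inf_le_right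
        exact hne12 (Submodule.eq_of_le_of_finrank_le h2 (by omega))
    have hmodV : finrank K ↥V + finrank K ↥(W₁ ⊓ W₂) = r₀ + r₀ := by
      have := Submodule.finrank_sup_add_finrank_inf_eq W₁ W₂
      rw [hrW₁, hrW₂] at this
      exact this
    have hVgt : r₀ < finrank K ↥V := by omega
    have hVn : finrank K ↥V ≤ n := V.finrank_le
    -- slope estimates
    have hr₁pos := hrk_pos W₁ hW₁
    have hr₂pos := hrk_pos W₂ hW₂
    have hd₁ : (c - δ) * (r₀ : ℝ) < deg W₁ := by
      rw [← hrW₁]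
      exact (lt_div_iff₀ hr₁pos).mp hsl₁
    have hd₂ : (c - δ) * (r₀ : ℝ) < deg W₂ := by
      rw [← hrW₂]
      exact (lt_div_iff₀ hr₂pos).mp hsl₂δ
    have hdinf : deg (W₁ ⊓ W₂) ≤ c * (finrank K ↥(W₁ ⊓ W₂) : ℝ) := hdegle _
    have hdV : deg W₁ + deg W₂ - deg (W₁ ⊓ W₂) ≤ deg V := hkey W₁ W₂
    -- upper bound on slope of V from the gap
    have hVub : deg V / (finrank K ↥V : ℝ) ≤ c - ε := by
      have h4 := (hεg (finrank K ↥V) hVgt hVn).2 V hVne rfl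
      have h5 := hεle (finrank K ↥V) hVgt hVn
      linarith
    have hrVpos := hrk_pos V hVne
    have hdVub : deg V ≤ (c - ε) * (finrank K ↥V : ℝ) := by
      rw [div_le_iff₀ hrVpos] at hVub
      linarith
    -- numerical contradiction
    have hcast : (finrank K ↥V : ℝ) + (finrank K ↥(W₁ ⊓ W₂) : ℝ) = (r₀ : ℝ) + (r₀ : ℝ) := by
      exact_mod_cast hmodV
    have hrV1 : (1 : ℝ) ≤ (finrank K ↥V : ℝ) := by
      have : 1 ≤ finrank K ↥V := by omega
      exact_mod_cast this
    have hrVlen : (finrank K ↥V : ℝ) ≤ (n : ℝ) := by exact_mod_cast hVn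
    have hr₀len : (r₀ : ℝ) ≤ (n : ℝ) := by exact_mod_cast hr₀n
    have hδn : 2 * (n : ℝ) * δ < ε := by
      have hn0 : (0 : ℝ) < 2 * (n : ℝ) + 1 := by positivity
      rw [hδ, ← mul_div_assoc, div_lt_iff₀ hn0]
      nlinarith [hεpos]
    have hc_cast : c * ((finrank K ↥V : ℝ) + (finrank K ↥(W₁ ⊓ W₂) : ℝ))
        = c * ((r₀ : ℝ) + (r₀ : ℝ)) := by rw [hcast]
    have e2 : ε * (finrank K ↥V : ℝ) < 2 * (δ * (r₀ : ℝ)) := by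
      linarith [hdVub, hdV, hd₁, hd₂, hdinf, hc_cast]
    have e3 : ε ≤ ε * (finrank K ↥V : ℝ) := le_mul_of_one_le_right hεpos.le hrV1
    have e4 : δ * (r₀ : ℝ) ≤ δ * (n : ℝ) := mul_le_mul_of_nonneg_left hr₀len hδpos.le
    linarith
  -- Step: construct the maximal destabilizing subspace.
  obtain ⟨W₀, hW₀, hslW₀⟩ := hatt
  set Q : ℕ → Prop := fun r => ∃ W : Submodule K E, W ≠ ⊥ ∧
      deg W / (finrank K ↥W : ℝ) = c ∧ finrank K ↥W = r with hQ
  have hQW₀ : Q (finrank K ↥W₀) := ⟨W₀, hW₀, hslW₀, rfl⟩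
  set rD : ℕ := Nat.findGreatest Q n with hrD
  have hQrD : Q rD := Nat.findGreatest_spec W₀.finrank_le hQW₀
  obtain ⟨D, hDne, hDsl, hDrk⟩ := hQrD
  have hmaxrk : ∀ W : Submodule K E, W ≠ ⊥ → deg W / (finrank K ↥W : ℝ) = c →
      finrank K ↥W ≤ rD := by
    intro W hW hsl
    by_contra hcon
    push_neg at hcon
    exact Nat.findGreatest_is_greatest hcon W.finrank_le ⟨W, hW, hsl, rfl⟩
  -- every slope-maximizing subspace is contained in D
  have hcontain : ∀ W : Submodule K E, W ≠ ⊥ → deg W / (finrank K ↥W : ℝ) = c → W ≤ D := by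
    intro W hW hsl
    have hrW := hrk_pos W hW
    have hrD' := hrk_pos D hDne
    have hdW : deg W = c * (finrank K ↥W : ℝ) := by
      field_simp at hsl
      linarith
    have hdD : deg D = c * (finrank K ↥D : ℝ) := by
      field_simp at hDsl
      linarith
    set V : Submodule K E := W ⊔ D with hV
    have hVne : V ≠ ⊥ := by
      intro h
      exact hDne (le_bot_iff.mp (h ▸ (le_sup_right : D ≤ V)))
    have hdinf : deg (W ⊓ D) ≤ c * (finrank K ↥(W ⊓ D) : ℝ) := hdegle _
    have hmod : finrank K ↥V + finrank K ↥(W ⊓ D) = finrank K ↥W + finrank K ↥D :=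
      Submodule.finrank_sup_add_finrank_inf_eq W D
    have hcast : (finrank K ↥V : ℝ) + (finrank K ↥(W ⊓ D) : ℝ)
        = (finrank K ↥W : ℝ) + (finrank K ↥D : ℝ) := by exact_mod_cast hmod
    have hc2 : c * ((finrank K ↥V : ℝ) + (finrank K ↥(W ⊓ D) : ℝ))
        = c * ((finrank K ↥W : ℝ) + (finrank K ↥D : ℝ)) := by rw [hcast]
    have hdVge : c * (finrank K ↥V : ℝ) ≤ deg V := by
      have h := hkey W D
      rw [← hV] at h
      linarith
    have hdVle : deg V ≤ c * (finrank K ↥V : ℝ) := hdegle V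
    have hrVpos := hrk_pos V hVne
    have hslV : deg V / (finrank K ↥V : ℝ) = c := by
      have : deg V = c * (finrank K ↥V : ℝ) := le_antisymm hdVle hdVge
      rw [this]
      field_simp
    have hrkV : finrank K ↥V ≤ rD := hmaxrk V hVne hslV
    have hDV : D = V := Submodule.eq_of_le_of_finrank_le le_sup_right (by omega)
    exact hDV ▸ (le_sup_left : W ≤ V)
  refine ⟨D, hDne, ⟨⟨D, hDne, rfl⟩, ?_⟩, ?_⟩
  · rintro x ⟨W, hW, rfl⟩
    rw [hDsl]
    exact hub W hW
  · intro W hW hsl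
    exact hcontain W hW (by rw [hsl, hDsl])
end

section
/- Let Ē be a hermitian vector bundle over ℚ̄ and M a nonzero subspace of E of rank r with E/M ≠ 0. Then μ̂_max(Ē/M̄) ≤ (r+1) μ̂_max(Ē) − r μ̂(M̄). -/
/-- Abstract form, for a degree function on subspaces: if `M` is a nonzero
proper subspace of rank `r` and `μmax` is the maximal slope
(`slope F = deg F / rank F` over nonzero subspaces), then the maximal slope of
the quotient satisfies `μ̂_max(E/M) ≤ (r+1) μmax − r μ(M)`, i.e. for every
subspace `F` with `M ⊊ F` (so that `F/M` is a nonzero subspace of `E/M`, of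
degree `deg F − deg M`), one has
`(deg F − deg M)/(rank F − rank M) ≤ (r+1) μmax − r (deg M / r)`. -/
theorem stmt15 {K E : Type*} [Field K] [AddCommGroup E] [Module K E]
    [FiniteDimensional K E]
    (deg : Submodule K E → ℝ) (hzero : deg ⊥ = 0)
    (hsub : ∀ A B : Submodule K E, deg A + deg B ≤ deg (A ⊓ B) + deg (A ⊔ B))
    (M : Submodule K E) (hM : M ≠ ⊥) (hMtop : M ≠ ⊤)
    (r : ℕ) (hr : r = Module.finrank K M)
    (μmax : ℝ)
    (hμ : IsGreatest {x : ℝ | ∃ W : Submodule K E, W ≠ ⊥ ∧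
      x = deg W / (Module.finrank K W : ℝ)} μmax) :
    ∀ G : Submodule K E, M < G →
      (deg G - deg M) / ((Module.finrank K G : ℝ) - (Module.finrank K M : ℝ)) ≤
        ((r : ℝ) + 1) * μmax - (r : ℝ) * (deg M / (r : ℝ)) := by
  intro G hG
  have hGbot : G ≠ ⊥ := by
    rintro rfl
    exact absurd hG (by simp)
  have hr0 : 0 < r := by
    rw [hr]
    exact Nat.pos_of_ne_zero fun h => hM (Submodule.finrank_eq_zero.mp h)
  have hlt : r < Module.finrank K G := hr ▸ Submodule.finrank_lt_finrank_of_lt hG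
  have hrR : (0:ℝ) < (r:ℝ) := by exact_mod_cast hr0
  have hnR : (0:ℝ) < (Module.finrank K G : ℝ) := by
    have := hr0.trans hlt
    exact_mod_cast this
  have hMμ : deg M ≤ (r:ℝ) * μmax := by
    have h := hμ.2 ⟨M, hM, rfl⟩
    rw [div_le_iff₀ (by rw [← hr]; exact hrR)] at h
    rw [← hr] at h
    linarith
  have hGμ : deg G ≤ (Module.finrank K G : ℝ) * μmax := by
    have h := hμ.2 ⟨G, hGbot, rfl⟩
    rw [div_le_iff₀ hnR] at h
    linarith
  have hge : (r:ℝ) + 1 ≤ (Module.finrank K G : ℝ) := by exact_mod_cast hlt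
  have hdr : (r : ℝ) * (deg M / (r:ℝ)) = deg M := by field_simp
  rw [hdr, ← hr]
  have hnr : (0:ℝ) < (Module.finrank K G : ℝ) - (r:ℝ) := by linarith
  rw [div_le_iff₀ hnr]
  nlinarith [mul_nonneg (by linarith : (0:ℝ) ≤ (Module.finrank K G : ℝ) - (r:ℝ) - 1)
    (by linarith : (0:ℝ) ≤ (r:ℝ) * μmax - deg M)]
end
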